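/- Let α ∈ (0,1), β ∈ (α,1) and let d ≥ 1 be an integer. Let λ:[0,T]→[0,∞) be measurable with ∫₀^T ( λ(t) + λ(t)^{1/(1−α)} + λ(t)^{2/(2−α)} ) dt < +∞. On a probability space (Ω,F,P), let (f_t) be a nonnegative measurable process with E[∫₀^T f_s ds] < +∞, let (Y_t) be a real-valued measurable process with E[sup_{t∈[0,T]} |Y_t|^β] < +∞, and let (Z_t), (Z'_t) be ℝ^d-valued measurable processes with E[(∫₀^T |Z_s|² ds)^{β/2}] < +∞ and E[(∫₀^T |Z'_s|² ds)^{β/2}] < +∞. Define φ_s := 2λ(s)(f_s + |Y_s| + |Z_s| + |Z'_s|)^α. Then E[(∫₀^T φ_s ds)^{β/α}] < +∞. (Integrability estimate (21) in the proof of Theorem 2.4.) -/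

import Mathlib

open MeasureTheory Set Filter Topology

open scoped ENNReal NNReal

noncomputable section

/-- The time interval `[0,T]`, where `0 < T ≤ +∞` is an extended real
(understood as `[0,+∞)` when `T = +∞`). -/
def timeSet (T : EReal) : Set ℝ := {s : ℝ | 0 ≤ s ∧ (s : EReal) ≤ T}

lemma aux_add_rpow_le (a b : ℝ≥0∞) {p : ℝ} (hp : 0 ≤ p) :
    (a + b) ^ p ≤ 2 ^ p * (a ^ p + b ^ p) := by
  have h1 : a + b ≤ 2 * (a ⊔ b) := by
    rw [two_mul]
    exact add_le_add le_sup_left le_sup_right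
  calc (a + b) ^ p ≤ (2 * (a ⊔ b)) ^ p := ENNReal.rpow_le_rpow h1 hp
    _ = 2 ^ p * (a ⊔ b) ^ p := ENNReal.mul_rpow_of_nonneg _ _ hp
    _ ≤ 2 ^ p * (a ^ p + b ^ p) := by
        gcongr
        rcases le_total a b with h | h
        · rw [sup_of_le_right h]
          exact le_add_self
        · rw [sup_of_le_left h]
          exact self_le_add_right _ _

lemma aux_rpow_le_one_add (x : ℝ≥0∞) {β : ℝ} (hβ0 : 0 ≤ β) (hβ1 : β ≤ 1) :
    x ^ β ≤ 1 + x := by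
  rcases le_total x 1 with h | h
  · calc x ^ β ≤ 1 ^ β := ENNReal.rpow_le_rpow h hβ0
      _ = 1 := ENNReal.one_rpow β
      _ ≤ 1 + x := le_self_add
  · calc x ^ β ≤ x ^ (1 : ℝ) := ENNReal.rpow_le_rpow_of_exponent_le h hβ1
      _ = x := ENNReal.rpow_one x
      _ ≤ 1 + x := le_add_self

lemma aux_one_le_two_rpow {p : ℝ} (hp : 0 ≤ p) : (1 : ℝ≥0∞) ≤ 2 ^ p := by
  calc (1 : ℝ≥0∞) = 1 ^ p := (ENNReal.one_rpow p).symm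
    _ ≤ 2 ^ p := ENNReal.rpow_le_rpow (by norm_num) hp

lemma aux_add4_rpow_le (a b c e : ℝ≥0∞) {p : ℝ} (hp : 0 ≤ p) :
    (a + b + c + e) ^ p ≤ (2 ^ p) ^ 3 * (a ^ p + b ^ p + c ^ p + e ^ p) := by
  have h2 := aux_one_le_two_rpow hp
  calc (a + b + c + e) ^ p
      ≤ 2 ^ p * ((a + b + c) ^ p + e ^ p) := aux_add_rpow_le _ _ hp
    _ ≤ 2 ^ p * (2 ^ p * ((a + b) ^ p + c ^ p) + e ^ p) := by
        gcongr; exact aux_add_rpow_le _ _ hp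
    _ ≤ 2 ^ p * (2 ^ p * (2 ^ p * (a ^ p + b ^ p) + c ^ p) + e ^ p) := by
        gcongr; exact aux_add_rpow_le _ _ hp
    _ = (2 ^ p) ^ 3 * a ^ p + (2 ^ p) ^ 3 * b ^ p + (2 ^ p) ^ 2 * c ^ p
        + (2 ^ p) ^ 1 * e ^ p := by ring
    _ ≤ (2 ^ p) ^ 3 * a ^ p + (2 ^ p) ^ 3 * b ^ p + (2 ^ p) ^ 3 * c ^ p
        + (2 ^ p) ^ 3 * e ^ p := by
        gcongr <;> first | exact h2 | norm_num
    _ = (2 ^ p) ^ 3 * (a ^ p + b ^ p + c ^ p + e ^ p) := by ring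

/-- **Integrability estimate (21) in the proof of Theorem 2.4.** With `α ∈ (0,1)`,
`β ∈ (α,1)`, `λ` satisfying `∫₀^T (λ + λ^{1/(1-α)} + λ^{2/(2-α)}) dt < ∞`, a nonnegative
process `f` with `E[∫₀^T f] < ∞`, a process `Y` with `E[sup_t |Y_t|^β] < ∞` and processes
`Z, Z'` with `E[(∫₀^T |Z|²)^{β/2}] < ∞`, `E[(∫₀^T |Z'|²)^{β/2}] < ∞`, the process
`φ_s = 2λ(s)(f_s + |Y_s| + |Z_s| + |Z'_s|)^α` satisfies `E[(∫₀^T φ_s ds)^{β/α}] < ∞`. -/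
theorem integrability_estimate_21
    {Ω : Type*} [MeasurableSpace Ω] (P : Measure Ω) [IsProbabilityMeasure P]
    (T : EReal) (hT : 0 < T)
    (d : ℕ) (hd : 1 ≤ d)
    (α β : ℝ) (hα : α ∈ Ioo (0 : ℝ) 1) (hβ : β ∈ Ioo α 1)
    (lam : ℝ → ℝ) (hlam_meas : Measurable lam) (hlam_nonneg : ∀ s, 0 ≤ lam s)
    (hlam_int : ∫⁻ s in timeSet T,
      ENNReal.ofReal (lam s + lam s ^ (1 / (1 - α)) + lam s ^ (2 / (2 - α))) < ⊤)
    (f : ℝ → Ω → ℝ)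
    (hf_meas : Measurable (Function.uncurry f))
    (hf_nonneg : ∀ s ω, 0 ≤ f s ω)
    (hf_int : ∫⁻ ω, (∫⁻ s in timeSet T, ENNReal.ofReal (f s ω)) ∂P < ⊤)
    (Y : ℝ → Ω → ℝ)
    (hY_meas : Measurable (Function.uncurry Y))
    (hY_int : ∫⁻ ω, (⨆ t ∈ timeSet T, ENNReal.ofReal (|Y t ω| ^ β)) ∂P < ⊤)
    (Z Z' : ℝ → Ω → EuclideanSpace ℝ (Fin d))
    (hZ_meas : Measurable (Function.uncurry Z))
    (hZ'_meas : Measurable (Function.uncurry Z'))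
    (hZ_int : ∫⁻ ω,
      (∫⁻ s in timeSet T, ENNReal.ofReal (‖Z s ω‖ ^ 2)) ^ (β / 2) ∂P < ⊤)
    (hZ'_int : ∫⁻ ω,
      (∫⁻ s in timeSet T, ENNReal.ofReal (‖Z' s ω‖ ^ 2)) ^ (β / 2) ∂P < ⊤)
    (φ : ℝ → Ω → ℝ)
    (hφ : ∀ s ω, φ s ω = 2 * lam s * (f s ω + |Y s ω| + ‖Z s ω‖ + ‖Z' s ω‖) ^ α) :
    ∫⁻ ω, (∫⁻ s in timeSet T, ENNReal.ofReal (φ s ω)) ^ (β / α) ∂P < ⊤ := by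
  obtain ⟨hα0, hα1⟩ := hα
  obtain ⟨hβα, hβ1⟩ := hβ
  have hβ0 : 0 < β := hα0.trans hβα
  have hp0 : 0 ≤ β / α := by positivity
  have hS : MeasurableSet (timeSet T) :=
    (measurableSet_Ici (a := (0:ℝ))).inter (measurable_coe_real_ereal measurableSet_Iic)
  -- measurability of sections in `s`
  have hfω : ∀ ω, Measurable (fun s => f s ω) := fun ω =>
    hf_meas.comp (measurable_id.prodMk measurable_const)
  have hYω : ∀ ω, Measurable (fun s => Y s ω) := fun ω =>
    hY_meas.comp (measurable_id.prodMk measurable_const)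
  have hZω : ∀ ω, Measurable (fun s => Z s ω) := fun ω =>
    hZ_meas.comp (measurable_id.prodMk measurable_const)
  have hZ'ω : ∀ ω, Measurable (fun s => Z' s ω) := fun ω =>
    hZ'_meas.comp (measurable_id.prodMk measurable_const)
  -- the λ-integrals
  set L : ℝ≥0∞ := ∫⁻ s in timeSet T, ENNReal.ofReal (lam s) with hLdef
  set L1 : ℝ≥0∞ := ∫⁻ s in timeSet T, ENNReal.ofReal (lam s ^ (1 / (1 - α))) with hL1def
  set L2 : ℝ≥0∞ := ∫⁻ s in timeSet T, ENNReal.ofReal (lam s ^ (2 / (2 - α))) with hL2def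
  have mlam : Measurable fun s => ENNReal.ofReal (lam s) :=
    ENNReal.measurable_ofReal.comp hlam_meas
  have mlam1 : Measurable fun s => ENNReal.ofReal (lam s ^ (1 / (1 - α))) :=
    ENNReal.measurable_ofReal.comp (hlam_meas.pow measurable_const)
  have mlam2 : Measurable fun s => ENNReal.ofReal (lam s ^ (2 / (2 - α))) :=
    ENNReal.measurable_ofReal.comp (hlam_meas.pow measurable_const)
  have hsplit : L + L1 + L2 < ⊤ := by
    have : (∫⁻ s in timeSet T,
        ENNReal.ofReal (lam s + lam s ^ (1 / (1 - α)) + lam s ^ (2 / (2 - α))))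
        = L + L1 + L2 := by
      rw [hLdef, hL1def, hL2def, ← lintegral_add_left mlam, ← lintegral_add_left (mlam.fun_add mlam1)]
      refine lintegral_congr fun s => ?_
      rw [ENNReal.ofReal_add (add_nonneg (hlam_nonneg s) (Real.rpow_nonneg (hlam_nonneg s) _))
          (Real.rpow_nonneg (hlam_nonneg s) _),
        ENNReal.ofReal_add (hlam_nonneg s) (Real.rpow_nonneg (hlam_nonneg s) _)]
    rwa [this] at hlam_int
  have hL : L < ⊤ := lt_of_le_of_lt (le_add_right (le_add_right le_rfl)) hsplit
  have hL1 : L1 < ⊤ := lt_of_le_of_lt (le_add_right (le_add_left le_rfl)) hsplit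
  have hL2 : L2 < ⊤ := lt_of_le_of_lt (le_add_left le_rfl) hsplit
  -- the building blocks
  set A : Ω → ℝ≥0∞ := fun ω =>
    ∫⁻ s in timeSet T, ENNReal.ofReal (lam s) * ENNReal.ofReal (f s ω) ^ α with hAdef
  set B : Ω → ℝ≥0∞ := fun ω =>
    ∫⁻ s in timeSet T, ENNReal.ofReal (lam s) * ENNReal.ofReal (|Y s ω|) ^ α with hBdef
  set C : Ω → ℝ≥0∞ := fun ω =>
    ∫⁻ s in timeSet T, ENNReal.ofReal (lam s) * (ENNReal.ofReal ‖Z s ω‖) ^ α with hCdef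
  set D : Ω → ℝ≥0∞ := fun ω =>
    ∫⁻ s in timeSet T, ENNReal.ofReal (lam s) * (ENNReal.ofReal ‖Z' s ω‖) ^ α with hDdef
  set IF : Ω → ℝ≥0∞ := fun ω => ∫⁻ s in timeSet T, ENNReal.ofReal (f s ω) with hIFdef
  set IZ : Ω → ℝ≥0∞ := fun ω => ∫⁻ s in timeSet T, ENNReal.ofReal (‖Z s ω‖ ^ 2) with hIZdef
  set IZ' : Ω → ℝ≥0∞ := fun ω => ∫⁻ s in timeSet T, ENNReal.ofReal (‖Z' s ω‖ ^ 2) with hIZ'def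
  set M : Ω → ℝ≥0∞ := fun ω => ⨆ t ∈ timeSet T, ENNReal.ofReal (|Y t ω| ^ β) with hMdef
  -- Step 1: pointwise bound on the inner integral
  have step1 : ∀ ω, (∫⁻ s in timeSet T, ENNReal.ofReal (φ s ω))
      ≤ 2 * (A ω + B ω + C ω + D ω) := by
    intro ω
    have hpt : ∀ s, ENNReal.ofReal (φ s ω)
        ≤ 2 * (ENNReal.ofReal (lam s) * ENNReal.ofReal (f s ω) ^ α
          + ENNReal.ofReal (lam s) * ENNReal.ofReal (|Y s ω|) ^ α
          + ENNReal.ofReal (lam s) * (ENNReal.ofReal ‖Z s ω‖) ^ α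
          + ENNReal.ofReal (lam s) * (ENNReal.ofReal ‖Z' s ω‖) ^ α) := by
      intro s
      have hg : (0:ℝ) ≤ f s ω + |Y s ω| + ‖Z s ω‖ + ‖Z' s ω‖ :=
        add_nonneg (add_nonneg (add_nonneg (hf_nonneg s ω) (abs_nonneg _)) (norm_nonneg _))
          (norm_nonneg _)
      have e1 : ENNReal.ofReal (φ s ω) = 2 * ENNReal.ofReal (lam s) *
          (ENNReal.ofReal (f s ω) + ENNReal.ofReal (|Y s ω|) + ENNReal.ofReal ‖Z s ω‖
            + ENNReal.ofReal ‖Z' s ω‖) ^ α := by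
        rw [hφ s ω, ENNReal.ofReal_mul (mul_nonneg (by norm_num) (hlam_nonneg s)),
          ENNReal.ofReal_mul (by norm_num : (0:ℝ) ≤ 2),
          ← ENNReal.ofReal_rpow_of_nonneg hg hα0.le,
          ENNReal.ofReal_add (add_nonneg (add_nonneg (hf_nonneg s ω) (abs_nonneg _))
            (norm_nonneg _)) (norm_nonneg _),
          ENNReal.ofReal_add (add_nonneg (hf_nonneg s ω) (abs_nonneg _)) (norm_nonneg _),
          ENNReal.ofReal_add (hf_nonneg s ω) (abs_nonneg _), ENNReal.ofReal_ofNat]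
      rw [e1]
      have hsub : (ENNReal.ofReal (f s ω) + ENNReal.ofReal (|Y s ω|) + ENNReal.ofReal ‖Z s ω‖
            + ENNReal.ofReal ‖Z' s ω‖) ^ α
          ≤ ENNReal.ofReal (f s ω) ^ α + ENNReal.ofReal (|Y s ω|) ^ α
            + (ENNReal.ofReal ‖Z s ω‖) ^ α + (ENNReal.ofReal ‖Z' s ω‖) ^ α := by
        calc (ENNReal.ofReal (f s ω) + ENNReal.ofReal (|Y s ω|) + ENNReal.ofReal ‖Z s ω‖
              + ENNReal.ofReal ‖Z' s ω‖) ^ α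
            ≤ (ENNReal.ofReal (f s ω) + ENNReal.ofReal (|Y s ω|) + ENNReal.ofReal ‖Z s ω‖) ^ α
              + (ENNReal.ofReal ‖Z' s ω‖) ^ α :=
              ENNReal.rpow_add_le_add_rpow _ _ hα0.le hα1.le
          _ ≤ ((ENNReal.ofReal (f s ω) + ENNReal.ofReal (|Y s ω|)) ^ α
              + (ENNReal.ofReal ‖Z s ω‖) ^ α) + (ENNReal.ofReal ‖Z' s ω‖) ^ α := by
              gcongr
              exact ENNReal.rpow_add_le_add_rpow _ _ hα0.le hα1.le
          _ ≤ ((ENNReal.ofReal (f s ω) ^ α + ENNReal.ofReal (|Y s ω|) ^ α)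
              + (ENNReal.ofReal ‖Z s ω‖) ^ α) + (ENNReal.ofReal ‖Z' s ω‖) ^ α := by
              gcongr
              exact ENNReal.rpow_add_le_add_rpow _ _ hα0.le hα1.le
      calc 2 * ENNReal.ofReal (lam s) *
            (ENNReal.ofReal (f s ω) + ENNReal.ofReal (|Y s ω|) + ENNReal.ofReal ‖Z s ω‖
              + ENNReal.ofReal ‖Z' s ω‖) ^ α
          ≤ 2 * ENNReal.ofReal (lam s) *
            (ENNReal.ofReal (f s ω) ^ α + ENNReal.ofReal (|Y s ω|) ^ α
              + (ENNReal.ofReal ‖Z s ω‖) ^ α + (ENNReal.ofReal ‖Z' s ω‖) ^ α) := by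
            gcongr
        _ = 2 * (ENNReal.ofReal (lam s) * ENNReal.ofReal (f s ω) ^ α
            + ENNReal.ofReal (lam s) * ENNReal.ofReal (|Y s ω|) ^ α
            + ENNReal.ofReal (lam s) * (ENNReal.ofReal ‖Z s ω‖) ^ α
            + ENNReal.ofReal (lam s) * (ENNReal.ofReal ‖Z' s ω‖) ^ α) := by ring
    calc (∫⁻ s in timeSet T, ENNReal.ofReal (φ s ω))
        ≤ ∫⁻ s in timeSet T, 2 * (ENNReal.ofReal (lam s) * ENNReal.ofReal (f s ω) ^ α
          + ENNReal.ofReal (lam s) * ENNReal.ofReal (|Y s ω|) ^ α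
          + ENNReal.ofReal (lam s) * (ENNReal.ofReal ‖Z s ω‖) ^ α
          + ENNReal.ofReal (lam s) * (ENNReal.ofReal ‖Z' s ω‖) ^ α) :=
          lintegral_mono hpt
      _ = 2 * ∫⁻ s in timeSet T, (ENNReal.ofReal (lam s) * ENNReal.ofReal (f s ω) ^ α
          + ENNReal.ofReal (lam s) * ENNReal.ofReal (|Y s ω|) ^ α
          + ENNReal.ofReal (lam s) * (ENNReal.ofReal ‖Z s ω‖) ^ α
          + ENNReal.ofReal (lam s) * (ENNReal.ofReal ‖Z' s ω‖) ^ α) :=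
          lintegral_const_mul' 2 _ (by norm_num)
      _ = 2 * (A ω + B ω + C ω + D ω) := by
          have m1 : Measurable fun s => ENNReal.ofReal (lam s) * ENNReal.ofReal (f s ω) ^ α :=
            mlam.mul ((ENNReal.measurable_ofReal.comp (hfω ω)).pow measurable_const)
          have m2 : Measurable fun s => ENNReal.ofReal (lam s) * ENNReal.ofReal (|Y s ω|) ^ α :=
            mlam.mul ((ENNReal.measurable_ofReal.comp ((hYω ω).abs)).pow measurable_const)
          have m3 : Measurable fun s => ENNReal.ofReal (lam s) * (ENNReal.ofReal ‖Z s ω‖) ^ α :=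
            mlam.mul ((ENNReal.measurable_ofReal.comp ((hZω ω).norm)).pow measurable_const)
          rw [lintegral_add_left ((m1.fun_add m2).fun_add m3), lintegral_add_left (m1.fun_add m2),
            lintegral_add_left m1]

  -- conjugate exponents
  have hpq1 : Real.HolderConjugate (1/(1-α)) (1/α) := by
    refine Real.holderConjugate_iff.mpr ⟨?_, ?_⟩
    · rw [lt_div_iff₀ (by linarith)]; linarith
    · rw [one_div, one_div, inv_inv, inv_inv]; linarith
  have hpq2 : Real.HolderConjugate (2/(2-α)) (2/α) := by
    refine Real.holderConjugate_iff.mpr ⟨?_, ?_⟩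
    · rw [lt_div_iff₀ (by linarith)]; linarith
    · rw [inv_div, inv_div, ← add_div]; field_simp; ring
  -- Hölder for the f-term
  have hA : ∀ ω, A ω ≤ L1 ^ (1-α) * IF ω ^ α := by
    intro ω
    have hm2 : AEMeasurable (fun s => (ENNReal.ofReal (f s ω)) ^ α)
        (volume.restrict (timeSet T)) :=
      ((ENNReal.measurable_ofReal.comp (hfω ω)).pow measurable_const).aemeasurable
    have h := ENNReal.lintegral_mul_le_Lp_mul_Lq (volume.restrict (timeSet T)) hpq1
      mlam.aemeasurable hm2
    simp only [Pi.mul_apply] at h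
    have e1 : (∫⁻ s in timeSet T, ENNReal.ofReal (lam s) ^ (1/(1-α))) = L1 :=
      lintegral_congr fun s => ENNReal.ofReal_rpow_of_nonneg (hlam_nonneg s)
        (le_of_lt (div_pos one_pos (by linarith)))
    have e2 : (∫⁻ s in timeSet T, ((ENNReal.ofReal (f s ω)) ^ α) ^ (1/α)) = IF ω :=
      lintegral_congr fun s => by
        rw [← ENNReal.rpow_mul, mul_one_div_cancel hα0.ne', ENNReal.rpow_one]
    rw [e1, e2, one_div_one_div, one_div_one_div] at h
    exact h
  -- supremum bound for the Y-term
  have hB : ∀ ω, B ω ≤ L * M ω ^ (α/β) := by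
    intro ω
    have hβαβ : β * (α/β) = α := by field_simp
    have hbd : ∀ s ∈ timeSet T,
        ENNReal.ofReal (lam s) * (ENNReal.ofReal (|Y s ω|)) ^ α
          ≤ ENNReal.ofReal (lam s) * M ω ^ (α/β) := by
      intro s hs
      gcongr
      have h1 : (ENNReal.ofReal (|Y s ω|)) ^ β ≤ M ω := by
        rw [ENNReal.ofReal_rpow_of_nonneg (abs_nonneg _) hβ0.le]
        exact le_iSup₂ (f := fun t (_ : t ∈ timeSet T) => ENNReal.ofReal (|Y t ω| ^ β)) s hs
      calc (ENNReal.ofReal (|Y s ω|)) ^ α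
          = ((ENNReal.ofReal (|Y s ω|)) ^ β) ^ (α/β) := by
            rw [← ENNReal.rpow_mul, hβαβ]
        _ ≤ M ω ^ (α/β) := ENNReal.rpow_le_rpow h1 (by positivity)
    calc B ω ≤ ∫⁻ s in timeSet T, ENNReal.ofReal (lam s) * M ω ^ (α/β) :=
        setLIntegral_mono' hS hbd
      _ = L * M ω ^ (α/β) := lintegral_mul_const _ mlam
  -- Hölder for the Z-terms
  have hCD : ∀ (W : ℝ → Ω → EuclideanSpace ℝ (Fin d)),
      Measurable (Function.uncurry W) → ∀ ω,
      (∫⁻ s in timeSet T, ENNReal.ofReal (lam s) * (ENNReal.ofReal ‖W s ω‖) ^ α)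
        ≤ L2 ^ ((2-α)/2) * (∫⁻ s in timeSet T, ENNReal.ofReal (‖W s ω‖ ^ 2)) ^ (α/2) := by
    intro W hW ω
    have hWω : Measurable fun s => W s ω := hW.comp (measurable_id.prodMk measurable_const)
    have hm2 : AEMeasurable (fun s => (ENNReal.ofReal ‖W s ω‖) ^ α)
        (volume.restrict (timeSet T)) :=
      ((ENNReal.measurable_ofReal.comp hWω.norm).pow measurable_const).aemeasurable
    have h := ENNReal.lintegral_mul_le_Lp_mul_Lq (volume.restrict (timeSet T)) hpq2
      mlam.aemeasurable hm2
    simp only [Pi.mul_apply] at h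
    have e1 : (∫⁻ s in timeSet T, ENNReal.ofReal (lam s) ^ (2/(2-α))) = L2 :=
      lintegral_congr fun s => ENNReal.ofReal_rpow_of_nonneg (hlam_nonneg s)
        (le_of_lt (div_pos two_pos (by linarith)))
    have e2 : (∫⁻ s in timeSet T, ((ENNReal.ofReal ‖W s ω‖) ^ α) ^ (2/α))
        = ∫⁻ s in timeSet T, ENNReal.ofReal (‖W s ω‖ ^ 2) :=
      lintegral_congr fun s => by
        have hαα : α * (2/α) = 2 := by field_simp
        rw [← ENNReal.rpow_mul, hαα,
          show ((2:ℝ)) = ((2:ℕ):ℝ) by norm_num, ENNReal.rpow_natCast,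
          ← ENNReal.ofReal_pow (norm_nonneg _)]
    rw [e1, e2, one_div_div, one_div_div] at h
    exact h
  -- raising to the power β/α
  have hαβα : α * (β/α) = β := by field_simp
  have hAp : ∀ ω, A ω ^ (β/α) ≤ L1 ^ ((1-α)*(β/α)) * (1 + IF ω) := by
    intro ω
    calc A ω ^ (β/α) ≤ (L1 ^ (1-α) * IF ω ^ α) ^ (β/α) := ENNReal.rpow_le_rpow (hA ω) hp0
      _ = L1 ^ ((1-α)*(β/α)) * IF ω ^ β := by
          rw [ENNReal.mul_rpow_of_nonneg _ _ hp0, ← ENNReal.rpow_mul, ← ENNReal.rpow_mul, hαβα]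
      _ ≤ L1 ^ ((1-α)*(β/α)) * (1 + IF ω) := by
          gcongr
          exact aux_rpow_le_one_add _ hβ0.le hβ1.le
  have hBp : ∀ ω, B ω ^ (β/α) ≤ L ^ (β/α) * M ω := by
    intro ω
    have h1 : (α/β) * (β/α) = 1 := by field_simp
    calc B ω ^ (β/α) ≤ (L * M ω ^ (α/β)) ^ (β/α) := ENNReal.rpow_le_rpow (hB ω) hp0
      _ = L ^ (β/α) * M ω := by
          rw [ENNReal.mul_rpow_of_nonneg _ _ hp0, ← ENNReal.rpow_mul, h1, ENNReal.rpow_one]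
  have hCDp : ∀ (W : ℝ → Ω → EuclideanSpace ℝ (Fin d)),
      Measurable (Function.uncurry W) → ∀ ω,
      (∫⁻ s in timeSet T, ENNReal.ofReal (lam s) * (ENNReal.ofReal ‖W s ω‖) ^ α) ^ (β/α)
        ≤ L2 ^ ((2-α)/2*(β/α))
          * (∫⁻ s in timeSet T, ENNReal.ofReal (‖W s ω‖ ^ 2)) ^ (β/2) := by
    intro W hW ω
    have h1 : (α/2) * (β/α) = β/2 := by field_simp
    calc (∫⁻ s in timeSet T, ENNReal.ofReal (lam s) * (ENNReal.ofReal ‖W s ω‖) ^ α) ^ (β/α)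
        ≤ (L2 ^ ((2-α)/2)
            * (∫⁻ s in timeSet T, ENNReal.ofReal (‖W s ω‖ ^ 2)) ^ (α/2)) ^ (β/α) :=
          ENNReal.rpow_le_rpow (hCD W hW ω) hp0
      _ = L2 ^ ((2-α)/2*(β/α))
            * (∫⁻ s in timeSet T, ENNReal.ofReal (‖W s ω‖ ^ 2)) ^ (β/2) := by
          rw [ENNReal.mul_rpow_of_nonneg _ _ hp0, ← ENNReal.rpow_mul, ← ENNReal.rpow_mul, h1]
  -- the key pointwise estimate
  set K : ℝ≥0∞ := 2 ^ (β/α) * (2 ^ (β/α)) ^ 3 with hKdef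
  have h2top : (2:ℝ≥0∞) ^ (β/α) ≠ ⊤ := ENNReal.rpow_ne_top_of_nonneg hp0 (by norm_num)
  have hKtop : K ≠ ⊤ := ENNReal.mul_ne_top h2top (ENNReal.pow_ne_top h2top)
  have key : ∀ ω, (∫⁻ s in timeSet T, ENNReal.ofReal (φ s ω)) ^ (β/α)
      ≤ (K * L1 ^ ((1-α)*(β/α))) * (1 + IF ω)
        + (K * L2 ^ ((2-α)/2*(β/α))) * IZ ω ^ (β/2)
        + (K * L2 ^ ((2-α)/2*(β/α))) * IZ' ω ^ (β/2)
        + (K * L ^ (β/α)) * M ω := by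
    intro ω
    calc (∫⁻ s in timeSet T, ENNReal.ofReal (φ s ω)) ^ (β/α)
        ≤ (2 * (A ω + B ω + C ω + D ω)) ^ (β/α) := ENNReal.rpow_le_rpow (step1 ω) hp0
      _ = 2 ^ (β/α) * (A ω + B ω + C ω + D ω) ^ (β/α) := ENNReal.mul_rpow_of_nonneg _ _ hp0
      _ ≤ 2 ^ (β/α) * ((2 ^ (β/α)) ^ 3
            * (A ω ^ (β/α) + B ω ^ (β/α) + C ω ^ (β/α) + D ω ^ (β/α))) := by
          gcongr
          exact aux_add4_rpow_le _ _ _ _ hp0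
      _ = K * A ω ^ (β/α) + K * B ω ^ (β/α) + K * C ω ^ (β/α) + K * D ω ^ (β/α) := by
          rw [hKdef]; ring
      _ ≤ K * (L1 ^ ((1-α)*(β/α)) * (1 + IF ω)) + K * (L ^ (β/α) * M ω)
          + K * (L2 ^ ((2-α)/2*(β/α)) * IZ ω ^ (β/2))
          + K * (L2 ^ ((2-α)/2*(β/α)) * IZ' ω ^ (β/2)) := by
          gcongr
          exacts [hAp ω, hBp ω, hCDp Z hZ_meas ω, hCDp Z' hZ'_meas ω]
      _ = (K * L1 ^ ((1-α)*(β/α))) * (1 + IF ω)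
          + (K * L2 ^ ((2-α)/2*(β/α))) * IZ ω ^ (β/2)
          + (K * L2 ^ ((2-α)/2*(β/α))) * IZ' ω ^ (β/2)
          + (K * L ^ (β/α)) * M ω := by ring
  -- ω-measurability of the dominating terms
  have hmIF : Measurable IF :=
    Measurable.lintegral_prod_right'
      (ENNReal.measurable_ofReal.comp (hf_meas.comp measurable_swap))
  have hmIZ : Measurable IZ :=
    Measurable.lintegral_prod_right'
      (ENNReal.measurable_ofReal.comp
        (((hZ_meas.comp measurable_swap).norm).pow measurable_const))
  have hmIZ' : Measurable IZ' :=
    Measurable.lintegral_prod_right'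
      (ENNReal.measurable_ofReal.comp
        (((hZ'_meas.comp measurable_swap).norm).pow measurable_const))
  -- finiteness of the constants
  have hc1 : K * L1 ^ ((1-α)*(β/α)) ≠ ⊤ :=
    ENNReal.mul_ne_top hKtop (ENNReal.rpow_ne_top_of_nonneg
      (mul_nonneg (by linarith) hp0) hL1.ne)
  have hc2 : K * L2 ^ ((2-α)/2*(β/α)) ≠ ⊤ :=
    ENNReal.mul_ne_top hKtop (ENNReal.rpow_ne_top_of_nonneg
      (mul_nonneg (div_nonneg (by linarith) (by norm_num)) hp0) hL2.ne)
  have hc4 : K * L ^ (β/α) ≠ ⊤ :=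
    ENNReal.mul_ne_top hKtop (ENNReal.rpow_ne_top_of_nonneg hp0 hL.ne)
  -- conclude
  have m1 : Measurable fun ω => (K * L1 ^ ((1-α)*(β/α))) * (1 + IF ω) :=
    (measurable_const.add hmIF).const_mul _
  have m2 : Measurable fun ω => (K * L2 ^ ((2-α)/2*(β/α))) * IZ ω ^ (β/2) :=
    ((hmIZ.pow measurable_const).const_mul _)
  have m3 : Measurable fun ω => (K * L2 ^ ((2-α)/2*(β/α))) * IZ' ω ^ (β/2) :=
    ((hmIZ'.pow measurable_const).const_mul _)
  calc ∫⁻ ω, (∫⁻ s in timeSet T, ENNReal.ofReal (φ s ω)) ^ (β / α) ∂P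
      ≤ ∫⁻ ω, ((K * L1 ^ ((1-α)*(β/α))) * (1 + IF ω)
          + (K * L2 ^ ((2-α)/2*(β/α))) * IZ ω ^ (β/2)
          + (K * L2 ^ ((2-α)/2*(β/α))) * IZ' ω ^ (β/2)
          + (K * L ^ (β/α)) * M ω) ∂P := lintegral_mono key
    _ = (∫⁻ ω, (K * L1 ^ ((1-α)*(β/α))) * (1 + IF ω) ∂P)
        + (∫⁻ ω, (K * L2 ^ ((2-α)/2*(β/α))) * IZ ω ^ (β/2) ∂P)
        + (∫⁻ ω, (K * L2 ^ ((2-α)/2*(β/α))) * IZ' ω ^ (β/2) ∂P)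
        + (∫⁻ ω, (K * L ^ (β/α)) * M ω ∂P) := by
        rw [lintegral_add_left ((m1.fun_add m2).fun_add m3), lintegral_add_left (m1.fun_add m2),
          lintegral_add_left m1]
    _ < ⊤ := by
        have h1 : (∫⁻ ω, (K * L1 ^ ((1-α)*(β/α))) * (1 + IF ω) ∂P) < ⊤ := by
          rw [lintegral_const_mul' _ _ hc1, lintegral_add_left measurable_const]
          simp only [lintegral_const, measure_univ, mul_one]
          exact ENNReal.mul_lt_top hc1.lt_top (ENNReal.add_lt_top.mpr ⟨ENNReal.one_lt_top, hf_int⟩)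
        have h2 : (∫⁻ ω, (K * L2 ^ ((2-α)/2*(β/α))) * IZ ω ^ (β/2) ∂P) < ⊤ := by
          rw [lintegral_const_mul' _ _ hc2]
          exact ENNReal.mul_lt_top hc2.lt_top hZ_int
        have h3 : (∫⁻ ω, (K * L2 ^ ((2-α)/2*(β/α))) * IZ' ω ^ (β/2) ∂P) < ⊤ := by
          rw [lintegral_const_mul' _ _ hc2]
          exact ENNReal.mul_lt_top hc2.lt_top hZ'_int
        have h4 : (∫⁻ ω, (K * L ^ (β/α)) * M ω ∂P) < ⊤ := by
          rw [lintegral_const_mul' _ _ hc4]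
          exact ENNReal.mul_lt_top hc4.lt_top hY_int
        exact ENNReal.add_lt_top.mpr
          ⟨ENNReal.add_lt_top.mpr ⟨ENNReal.add_lt_top.mpr ⟨h1, h2⟩, h3⟩, h4⟩
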